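/- arXiv:2307.12391 — 2 statements merged into one kernel-verified Lean document; each statement's English description precedes it below -/
import Mathlib

section
/- Let L be a bounded lattice and let Spc(L) be its set of prime ideals topologized so that the sets supp(a) = {I | a ∉ I}, a ∈ L, form a basis of closed sets. For any topological space X and any closed support datum σ : L → Cl(X) (a map with σ(0) = ∅, σ(1) = X, σ(a ∨ b) = σ(a) ∪ σ(b), σ(a ∧ b) = σ(a) ∩ σ(b)), there exists a unique continuous map f : X → Spc(L) with σ(a) = f⁻¹(supp(a)) for all a ∈ L; moreover f is given by f(x) = {a ∈ L | x ∉ σ(a)}. -/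
/-- `I` is an ideal of the join-semilattice `L`: it contains the bottom element,
is closed under binary joins, and is downward closed. -/
def IsIdeal {L : Type*} [SemilatticeSup L] [OrderBot L] (I : Set L) : Prop :=
  ⊥ ∈ I ∧ (∀ a ∈ I, ∀ b ∈ I, a ⊔ b ∈ I) ∧ ∀ a b : L, a ≤ b → b ∈ I → a ∈ I

/-- `I` is a prime ideal of the bounded lattice `L`: it is a proper ideal such that
`a ⊓ b ∈ I` implies `a ∈ I` or `b ∈ I`. -/
def IsPrimeIdeal {L : Type*} [Lattice L] [BoundedOrder L] (I : Set L) : Prop :=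
  IsIdeal I ∧ I ≠ Set.univ ∧ ∀ a b : L, a ⊓ b ∈ I → a ∈ I ∨ b ∈ I

/-- The set `Spc(L)` of prime ideals of the bounded lattice `L`. -/
def Spc (L : Type*) [Lattice L] [BoundedOrder L] := {I : Set L // IsPrimeIdeal I}

/-- `supp a = {I ∈ Spc(L) | a ∉ I}`. -/
def supp {L : Type*} [Lattice L] [BoundedOrder L] (a : L) : Set (Spc L) :=
  {I : Spc L | a ∉ I.1}

/-- The topology on `Spc(L)` for which the sets `supp a`, `a ∈ L`, form a basis of
closed sets. -/
instance (L : Type*) [Lattice L] [BoundedOrder L] : TopologicalSpace (Spc L) :=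
  TopologicalSpace.generateFrom {U : Set (Spc L) | ∃ a : L, U = (supp a)ᶜ}

theorem stmt8 {L : Type*} [Lattice L] [BoundedOrder L]
    {X : Type*} [TopologicalSpace X] (σ : L → Set X)
    (hclosed : ∀ a : L, IsClosed (σ a)) (hbot : σ ⊥ = ∅) (htop : σ ⊤ = Set.univ)
    (hsup : ∀ a b : L, σ (a ⊔ b) = σ a ∪ σ b)
    (hinf : ∀ a b : L, σ (a ⊓ b) = σ a ∩ σ b) :
    (∃! f : X → Spc L, Continuous f ∧ ∀ a : L, σ a = f ⁻¹' supp a) ∧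
    ∀ f : X → Spc L, (Continuous f ∧ ∀ a : L, σ a = f ⁻¹' supp a) →
      ∀ x : X, (f x).1 = {a : L | x ∉ σ a} := by
  have key : ∀ f : X → Spc L, (Continuous f ∧ ∀ a : L, σ a = f ⁻¹' supp a) →
      ∀ x : X, (f x).1 = {a : L | x ∉ σ a} := by
    intro f ⟨_, hf⟩ x
    ext a
    have : x ∈ σ a ↔ a ∉ (f x).1 := by rw [hf a]; rfl
    simp only [Set.mem_setOf_eq]
    tauto
  have hprime : ∀ x : X, IsPrimeIdeal {a : L | x ∉ σ a} := by
    intro x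
    refine ⟨⟨by simp [hbot], ?_, ?_⟩, ?_, ?_⟩
    · intro a ha b hb hx
      rw [hsup] at hx
      exact hx.elim ha hb
    · intro a b hab hb
      have : a ⊓ b = a := inf_eq_left.mpr hab
      simp only [Set.mem_setOf_eq] at *
      intro hx
      exact hb (by rw [← this, hinf] at hx; exact hx.2)
    · intro h
      have : (⊤ : L) ∈ {a : L | x ∉ σ a} := h ▸ Set.mem_univ _
      simp [htop] at this
    · intro a b hab
      simp only [Set.mem_setOf_eq, hinf a b, Set.mem_inter_iff] at hab
      tauto
  set f : X → Spc L := fun x => ⟨{a : L | x ∉ σ a}, hprime x⟩ with hfdef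
  have hfs : ∀ a : L, σ a = f ⁻¹' supp a := by
    intro a
    ext x
    simp only [hfdef, Set.mem_preimage, supp, Set.mem_setOf_eq, not_not]
    exact not_not.symm
  have hcont : Continuous f := by
    rw [continuous_generateFrom_iff]
    rintro U ⟨a, rfl⟩
    have : f ⁻¹' (supp a)ᶜ = (σ a)ᶜ := by rw [Set.preimage_compl, ← hfs a]
    rw [this]
    exact (hclosed a).isOpen_compl
  refine ⟨⟨f, ⟨hcont, hfs⟩, ?_⟩, key⟩
  intro g hg
  funext x
  exact Subtype.ext ((key g hg x).trans rfl)
end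

section
/- Let (T, ⊗) be a tensor triangulated category. The assignment sending a radical thick tensor ideal S ⊆ T to {⟨X⟩ ∈ L(T,⊗) | X ∈ S} is a lattice isomorphism from the lattice of radical thick tensor ideals of T onto the ideal lattice Id(L(T,⊗)). -/
open CategoryTheory CategoryTheory.Limits CategoryTheory.Pretriangulated
  CategoryTheory.MonoidalCategory

variable (C : Type*) [Category C] [HasZeroObject C] [HasShift C ℤ] [Preadditive C]
  [∀ n : ℤ, (CategoryTheory.shiftFunctor C n).Additive] [Pretriangulated C]
  [HasBinaryBiproducts C] [MonoidalCategory C]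
  -- the monoidal structure is exact (triangulated) in each variable:
  [∀ X : C, (tensorLeft X).CommShift ℤ] [∀ X : C, (tensorLeft X).IsTriangulated]
  [∀ X : C, (tensorRight X).CommShift ℤ] [∀ X : C, (tensorRight X).IsTriangulated]

/-- A thick subcategory of the triangulated category `C`, given by its class of objects. -/
def IsThick (S : Set C) : Prop :=
  (∀ X : C, IsZero X → X ∈ S) ∧
  (∀ X Y : C, (X ≅ Y) → X ∈ S → Y ∈ S) ∧
  (∀ (X : C) (n : ℤ), X ∈ S → (CategoryTheory.shiftFunctor C n).obj X ∈ S) ∧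
  (∀ T : Triangle C, T ∈ (distTriang C) → T.obj₁ ∈ S → T.obj₃ ∈ S → T.obj₂ ∈ S) ∧
  (∀ X Y : C, (∃ (i : X ⟶ Y) (r : Y ⟶ X), i ≫ r = 𝟙 X) → Y ∈ S → X ∈ S)

/-- A radical thick tensor ideal of `(C, ⊗)`: a thick subcategory `S` such that
`X ⊗ Y ∈ S` whenever `X ∈ S` or `Y ∈ S`, and such that `X ⊗ X ∈ S` implies `X ∈ S`. -/
def IsRadThickTensorIdeal (S : Set C) : Prop :=
  IsThick C S ∧
  (∀ X Y : C, X ∈ S ∨ Y ∈ S → (X ⊗ Y) ∈ S) ∧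
  (∀ X : C, (X ⊗ X) ∈ S → X ∈ S)

/-- `⟨X⟩`, the radical thick tensor ideal generated by `X`. -/
def rgen (X : C) : Set C := ⋂₀ {S : Set C | IsRadThickTensorIdeal C S ∧ X ∈ S}

variable {C} in
/-- The equivalence relation `X ≈ Y` iff `⟨X⟩ = ⟨Y⟩`. -/
def rSetoid : Setoid C :=
  ⟨fun X Y => rgen C X = rgen C Y, fun _ => rfl, Eq.symm, Eq.trans⟩

/-- `L(T,⊗) = Ob T / ≈`. -/
def LQ := Quotient (rSetoid (C := C))

variable {C} in
/-- The class `⟨X⟩ ∈ L(T,⊗)` of an object `X`. -/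
def cls (X : C) : LQ C := Quotient.mk rSetoid X

/-- Ideals of the lattice `L(T,⊗)` (ordered by `⟨X⟩ ⊆ ⟨Y⟩`, with join
`⟨X ⊞ Y⟩` and bottom the class of zero objects): downward closed subsets
containing the bottom and closed under joins. -/
def IsIdealQ (I : Set (LQ C)) : Prop :=
  (∀ Z : C, IsZero Z → cls Z ∈ I) ∧
  (∀ X Y : C, rgen C X ⊆ rgen C Y → cls Y ∈ I → cls X ∈ I) ∧
  (∀ X Y : C, cls X ∈ I → cls Y ∈ I → cls (X ⊞ Y) ∈ I)

section Aux

variable {C}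

lemma mem_rgen_self (X : C) : X ∈ rgen C X := fun _ hS => hS.2

lemma rgen_subset {X : C} {S : Set C} (hS : IsRadThickTensorIdeal C S) (hX : X ∈ S) :
    rgen C X ⊆ S := fun _ h => h S ⟨hS, hX⟩

lemma rgen_isIdeal (X : C) : IsRadThickTensorIdeal C (rgen C X) :=
  ⟨⟨fun Z hZ S hS => hS.1.1.1 Z hZ,
    fun A B e hA S hS => hS.1.1.2.1 A B e (hA S hS),
    fun A n hA S hS => hS.1.1.2.2.1 A n (hA S hS),
    fun T hT h1 h3 S hS => hS.1.1.2.2.2.1 T hT (h1 S hS) (h3 S hS),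
    fun A B r hB S hS => hS.1.1.2.2.2.2 A B r (hB S hS)⟩,
    fun A B h S hS => hS.1.2.1 A B (h.imp (fun hA => hA S hS) (fun hB => hB S hS)),
    fun A h S hS => hS.1.2.2 A (h S hS)⟩

lemma rgen_mono_of_mem {X Y : C} (h : Y ∈ rgen C X) : rgen C Y ⊆ rgen C X :=
  rgen_subset (rgen_isIdeal X) h

lemma mem_of_rgen_eq {X Y : C} (h : rgen C X = rgen C Y) {S : Set C}
    (hS : IsRadThickTensorIdeal C S) (hX : X ∈ S) : Y ∈ S :=
  (h ▸ rgen_subset hS hX) (mem_rgen_self Y)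

lemma mem_of_cls_mem_image {S : Set C} (hS : IsRadThickTensorIdeal C S) {X : C}
    (h : cls X ∈ cls '' S) : X ∈ S := by
  obtain ⟨Y, hY, hYX⟩ := h
  exact mem_of_rgen_eq (Quotient.exact hYX) hS hY

end Aux

theorem stmt18 :
    ∃ e : {S : Set C // IsRadThickTensorIdeal C S} ≃o {I : Set (LQ C) // IsIdealQ C I},
      ∀ (S : {S : Set C // IsRadThickTensorIdeal C S}) (X : C),
        cls X ∈ (e S).1 ↔ X ∈ S.1 := by
  have himg : ∀ S : {S : Set C // IsRadThickTensorIdeal C S}, IsIdealQ C (cls '' S.1) := by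
    intro ⟨S, hS⟩
    refine ⟨fun Z hZ => ⟨Z, hS.1.1 Z hZ, rfl⟩, ?_, ?_⟩
    · intro X Y hsub hY
      have hYS : Y ∈ S := mem_of_cls_mem_image hS hY
      exact ⟨X, rgen_subset hS hYS (hsub (mem_rgen_self X)), rfl⟩
    · intro X Y hX hY
      have hXS : X ∈ S := mem_of_cls_mem_image hS hX
      have hYS : Y ∈ S := mem_of_cls_mem_image hS hY
      exact ⟨X ⊞ Y,
        hS.1.2.2.2.1 _ (binaryBiproductTriangle_distinguished X Y) hXS hYS, rfl⟩
  have hpre : ∀ I : {I : Set (LQ C) // IsIdealQ C I},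
      IsRadThickTensorIdeal C {X : C | cls X ∈ I.1} := by
    intro ⟨I, hz, hdown, hjoin⟩
    refine ⟨⟨fun Z hZ => hz Z hZ, ?_, ?_, ?_, ?_⟩, ?_, ?_⟩
    · intro A B e hA
      exact hdown B A (rgen_mono_of_mem ((rgen_isIdeal A).1.2.1 A B e (mem_rgen_self A))) hA
    · intro A n hA
      exact hdown _ A (rgen_mono_of_mem ((rgen_isIdeal A).1.2.2.1 A n (mem_rgen_self A))) hA
    · intro T hT h1 h3
      have hbi : cls (T.obj₁ ⊞ T.obj₃) ∈ I := hjoin _ _ h1 h3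
      refine hdown _ _ (rgen_mono_of_mem ?_) hbi
      have h1' : T.obj₁ ∈ rgen C (T.obj₁ ⊞ T.obj₃) :=
        (rgen_isIdeal _).1.2.2.2.2 _ _ ⟨biprod.inl, biprod.fst, by simp⟩
          (mem_rgen_self _)
      have h3' : T.obj₃ ∈ rgen C (T.obj₁ ⊞ T.obj₃) :=
        (rgen_isIdeal _).1.2.2.2.2 _ _ ⟨biprod.inr, biprod.snd, by simp⟩
          (mem_rgen_self _)
      exact (rgen_isIdeal _).1.2.2.2.1 T hT h1' h3'
    · intro A B r hB
      exact hdown A B (rgen_mono_of_mem ((rgen_isIdeal B).1.2.2.2.2 A B r (mem_rgen_self B))) hB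
    · intro A B h
      rcases h with hA | hB
      · exact hdown _ A
          (rgen_mono_of_mem ((rgen_isIdeal A).2.1 A B (Or.inl (mem_rgen_self A)))) hA
      · exact hdown _ B
          (rgen_mono_of_mem ((rgen_isIdeal B).2.1 A B (Or.inr (mem_rgen_self B)))) hB
    · intro A h
      exact hdown A (A ⊗ A)
        (rgen_mono_of_mem ((rgen_isIdeal (A ⊗ A)).2.2 A (mem_rgen_self (A ⊗ A)))) h
  refine ⟨⟨⟨fun S => ⟨cls '' S.1, himg S⟩, fun I => ⟨{X : C | cls X ∈ I.1}, hpre I⟩,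
    ?_, ?_⟩, ?_⟩, fun S X => ⟨mem_of_cls_mem_image S.2, fun h => ⟨X, h, rfl⟩⟩⟩
  · intro S
    ext X
    exact ⟨mem_of_cls_mem_image S.2, fun h => ⟨X, h, rfl⟩⟩
  · intro I
    apply Subtype.ext
    ext c
    constructor
    · rintro ⟨X, hX, rfl⟩; exact hX
    · intro hc
      obtain ⟨X, rfl⟩ := Quot.exists_rep c
      exact ⟨X, hc, rfl⟩
  · intro S₁ S₂
    constructor
    · intro h X hX
      exact mem_of_cls_mem_image S₂.2 (h ⟨X, hX, rfl⟩)
    · intro h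
      exact Set.image_mono h
end
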